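/- Let Π be a rectagraph and π : Q_n → Π a covering from the n-cube. Then for every vertex v of Π, the fiber π⁻¹(v) is a single orbit of the group K^π = {g ∈ Aut(Q_n) : π∘g = π}, on which K^π acts regularly. -/

import Mathlib

/-- The `n`-cube: vertices are vectors in `𝔽₂ⁿ`, adjacent iff at Hamming distance 1. -/
def cube (n : ℕ) : SimpleGraph (Fin n → ZMod 2) where
  Adj x y := hammingDist x y = 1
  symm := ⟨fun x y h => by rwa [hammingDist_comm]⟩
  loopless := ⟨fun x h => by simp [hammingDist_self] at h⟩

/-- A rectagraph: a connected triangle-free graph in which every 2-arc lies in a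
unique quadrangle. -/
def IsRectagraph {V : Type*} (P : SimpleGraph V) : Prop :=
  P.Connected ∧ P.CliqueFree 3 ∧
    ∀ u v w : V, P.Adj v u → P.Adj v w → u ≠ w →
      ∃! x : V, x ≠ v ∧ P.Adj u x ∧ P.Adj w x

/-- `f` is a covering from `G` to `H`. -/
def IsCovering {V W : Type*} (G : SimpleGraph V) (H : SimpleGraph W)
    (f : V → W) : Prop :=
  Function.Surjective f ∧
    ∀ x : V, Set.BijOn f (G.neighborSet x) (H.neighborSet (f x))

/-- The standard basis vector `e_i` of `𝔽₂ⁿ`. -/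
def stdBasis (n : ℕ) (i : Fin n) : Fin n → ZMod 2 :=
  fun k => if k = i then 1 else 0

namespace CubeAux

variable {n : ℕ}

lemma hd_def (a b : Fin n → ZMod 2) :
    hammingDist a b = (Finset.univ.filter fun k => a k ≠ b k).card := rfl

lemma stdBasis_self (i : Fin n) : stdBasis n i i = 1 := if_pos rfl

lemma stdBasis_apply_ne {i k : Fin n} (h : k ≠ i) : stdBasis n i k = 0 := if_neg h

lemma stdBasis_ne {i j : Fin n} (h : i ≠ j) : stdBasis n i ≠ stdBasis n j := by
  intro he
  have := congrFun he i
  rw [stdBasis_self, stdBasis_apply_ne h] at this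
  exact one_ne_zero this

lemma cube_adj {a b : Fin n → ZMod 2} :
    (cube n).Adj a b ↔ ∃ i, b = a + stdBasis n i := by
  constructor
  · intro h
    have h' : (Finset.univ.filter fun k => a k ≠ b k).card = 1 := h
    obtain ⟨i, hi⟩ := Finset.card_eq_one.mp h'
    refine ⟨i, funext fun k => ?_⟩
    by_cases hk : k = i
    · subst hk
      have : a k ≠ b k := by
        have : k ∈ Finset.univ.filter fun k => a k ≠ b k := by rw [hi]; simp
        simpa using this
      revert this
      simp only [Pi.add_apply, stdBasis, if_pos rfl]
      generalize a k = A; generalize b k = B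
      revert A B; decide
    · have : k ∉ Finset.univ.filter fun k => a k ≠ b k := by rw [hi]; simp [hk]
      simp only [Finset.mem_filter, Finset.mem_univ, true_and, not_not] at this
      simp [stdBasis, hk, ← this]
  · rintro ⟨i, rfl⟩
    show (Finset.univ.filter fun k => a k ≠ (a + stdBasis n i) k).card = 1
    have : (Finset.univ.filter fun k => a k ≠ (a + stdBasis n i) k) = {i} := by
      ext k
      simp only [Finset.mem_filter, Finset.mem_univ, true_and, Finset.mem_singleton,
        Pi.add_apply]
      by_cases hk : k = i
      · subst hk
        rw [stdBasis_self]
        constructor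
        · intro _; rfl
        · intro _; generalize a k = A; revert A; decide
      · rw [stdBasis_apply_ne hk]
        simpa using hk
    rw [this]; simp

lemma hammingDist_flip (a b : Fin n → ZMod 2) (i : Fin n) (h : a i ≠ b i) :
    hammingDist (a + stdBasis n i) b + 1 = hammingDist a b := by
  rw [hd_def, hd_def]
  have hset : (Finset.univ.filter fun k => (a + stdBasis n i) k ≠ b k)
      = (Finset.univ.filter fun k => a k ≠ b k).erase i := by
    ext k
    simp only [Finset.mem_filter, Finset.mem_univ, true_and, Finset.mem_erase,
      Pi.add_apply]
    by_cases hk : k = i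
    · subst hk
      rw [stdBasis_self]
      constructor
      · intro hkk
        exact absurd hkk (by revert h; generalize a k = A; generalize b k = B; revert A B; decide)
      · rintro ⟨hkk, -⟩; exact absurd rfl hkk
    · rw [stdBasis_apply_ne hk, add_zero]
      simp [hk]
  rw [hset]
  exact Finset.card_erase_add_one (by simp [h])

lemma cube_reachable (a b : Fin n → ZMod 2) : (cube n).Reachable a b := by
  generalize hm : hammingDist a b = m
  induction m generalizing a with
  | zero => rw [hammingDist_eq_zero.mp hm]
  | succ m ih =>
    have hne : a ≠ b := by
      intro h; subst h; simp at hm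
    obtain ⟨i, hi⟩ : ∃ i, a i ≠ b i := by
      by_contra hc; push_neg at hc; exact hne (funext hc)
    have hflip := hammingDist_flip a b i hi
    have hadj : (cube n).Adj a (a + stdBasis n i) := cube_adj.mpr ⟨i, rfl⟩
    exact (hadj.reachable).trans (ih _ (by omega))

lemma adj_add (a : Fin n → ZMod 2) (i : Fin n) :
    (cube n).Adj a (a + stdBasis n i) := cube_adj.mpr ⟨i, rfl⟩

lemma add_stdBasis_self (a : Fin n → ZMod 2) (i : Fin n) :
    a + stdBasis n i + stdBasis n i = a := by
  funext k
  simp only [Pi.add_apply]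
  generalize a k = A; generalize stdBasis n i k = B; revert A B; decide

lemma add_add_ne (a : Fin n → ZMod 2) {i j : Fin n} (h : i ≠ j) :
    a + stdBasis n i + stdBasis n j ≠ a := by
  intro he
  have hc := congrFun he i
  rw [Pi.add_apply, Pi.add_apply, stdBasis_self, stdBasis_apply_ne h] at hc
  revert hc
  generalize a i = A; revert A; decide

end CubeAux

open CubeAux

/-- For a covering `f : Q_n → P` of a rectagraph `P`, every fiber of `f` is a
single orbit of `K^f = {g ∈ Aut(Q_n) : f ∘ g = f}` on which `K^f` acts
regularly: for any two vertices `x, y` in a common fiber, there is a unique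
`g ∈ K^f` with `g x = y`. -/
theorem fiber_regular_orbit {n : ℕ} {V : Type*} [Finite V]
    (P : SimpleGraph V) (hP : IsRectagraph P)
    (f : (Fin n → ZMod 2) → V) (hf : IsCovering (cube n) P f)
    (v : V) (x y : Fin n → ZMod 2) (hx : f x = v) (hy : f y = v) :
    ∃! g : cube n ≃g cube n, (∀ z, f (g z) = f z) ∧ g x = y := by
  classical
  have hinjN : ∀ z : Fin n → ZMod 2, Set.InjOn f ((cube n).neighborSet z) :=
    fun z => (hf.2 z).injOn
  have hmaps : ∀ (z : Fin n → ZMod 2) (i : Fin n),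
      P.Adj (f z) (f (z + stdBasis n i)) :=
    fun z i => (hf.2 z).mapsTo (adj_add z i)
  -- construct the coordinate permutation σ
  have hσex : ∀ i : Fin n, ∃ j : Fin n, f (y + stdBasis n j) = f (x + stdBasis n i) := by
    intro i
    have h1 : f (x + stdBasis n i) ∈ P.neighborSet (f y) := by
      rw [hy, ← hx]; exact hmaps x i
    obtain ⟨b, hb, hfb⟩ := (hf.2 y).surjOn h1
    obtain ⟨j, rfl⟩ := cube_adj.mp hb
    exact ⟨j, hfb⟩
  choose σ0 hσ0 using hσex
  have hσinj : Function.Injective σ0 := by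
    intro i i' h
    have h1 : f (x + stdBasis n i) = f (x + stdBasis n i') := by
      rw [← hσ0 i, ← hσ0 i', h]
    have h2 := hinjN x (adj_add x i) (adj_add x i') h1
    by_contra hne
    exact stdBasis_ne hne (add_left_cancel h2)
  let σ : Equiv.Perm (Fin n) := Equiv.ofBijective σ0 (Finite.injective_iff_bijective.mp hσinj)
  have hσdef : ∀ i, σ i = σ0 i := fun _ => rfl
  let A : (Fin n → ZMod 2) → (Fin n → ZMod 2) := fun w k => w (σ.symm k)
  have hA_basis : ∀ j, A (stdBasis n j) = stdBasis n (σ j) := by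
    intro j; funext k
    by_cases hk : k = σ j
    · subst hk
      show stdBasis n j (σ.symm (σ j)) = _
      rw [σ.symm_apply_apply, stdBasis_self, stdBasis_self]
    · show stdBasis n j (σ.symm k) = _
      rw [stdBasis_apply_ne hk,
        stdBasis_apply_ne (fun h => hk (by rw [← h, σ.apply_symm_apply]))]
  have hA_add : ∀ w w', A (w + w') = A w + A w' := fun _ _ => rfl
  -- the key deck-transformation identity, by induction on Hamming weight
  have key : ∀ (m : ℕ) (w : Fin n → ZMod 2), hammingDist 0 w = m →
      f (x + w) = f (y + A w) ∧
      ∀ j, f (x + w + stdBasis n j) = f (y + A w + stdBasis n (σ j)) := by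
    intro m
    induction m with
    | zero =>
      intro w hw
      have hw0 : w = 0 := (hammingDist_eq_zero.mp hw).symm
      subst hw0
      have hA0 : A 0 = 0 := rfl
      rw [hA0, add_zero, add_zero]
      refine ⟨hx.trans hy.symm, fun j => ?_⟩
      rw [hσdef]
      exact (hσ0 j).symm
    | succ m ih =>
      intro w hw
      obtain ⟨i, hi⟩ : ∃ i, w i ≠ 0 := by
        by_contra hc; push_neg at hc
        have : w = 0 := funext hc
        subst this
        simp at hw
      set w' := w + stdBasis n i with hw'def
      have hw'm : hammingDist 0 w' = m := by
        have h1 := hammingDist_flip w 0 i (by simpa using hi)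
        rw [← hw'def] at h1
        rw [hammingDist_comm 0 w] at hw
        rw [hammingDist_comm 0 w']
        omega
      obtain ⟨ih1, ih2⟩ := ih w' hw'm
      have hxw : x + w = (x + w') + stdBasis n i := by
        rw [hw'def, add_assoc x, add_stdBasis_self]
      have hyw : y + A w = (y + A w') + stdBasis n (σ i) := by
        rw [hw'def, add_assoc y, ← hA_basis, ← hA_add, add_stdBasis_self]
      constructor
      · rw [hxw, hyw]; exact ih2 i
      · intro j
        by_cases hj : j = i
        · subst hj
          rw [hxw, hyw, add_stdBasis_self, add_stdBasis_self]
          exact ih1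
        · set a := x + w' with ha
          set b := y + A w' with hb2
          rw [hxw, hyw]
          have hσij : σ i ≠ σ j := fun h => hj (σ.injective h).symm
          have k0 : f a = f b := ih1
          have k1 : f (a + stdBasis n i) = f (b + stdBasis n (σ i)) := ih2 i
          have k2 : f (a + stdBasis n j) = f (b + stdBasis n (σ j)) := ih2 j
          have hne12 : f (a + stdBasis n i) ≠ f (a + stdBasis n j) := by
            intro h
            have := hinjN a (adj_add a i) (adj_add a j) h
            exact stdBasis_ne (Ne.symm hj) (add_left_cancel this)
          have hEU := hP.2.2 (f (a + stdBasis n i)) (f a) (f (a + stdBasis n j))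
            (hmaps a i) (hmaps a j) hne12
          have hadj_back : ∀ (c : Fin n → ZMod 2) (ii : Fin n),
              (cube n).Adj (c + stdBasis n ii) c := by
            intro c ii
            have := adj_add (c + stdBasis n ii) ii
            rwa [add_stdBasis_self] at this
          have cand1 : f (a + stdBasis n i + stdBasis n j) ≠ f a ∧
              P.Adj (f (a + stdBasis n i)) (f (a + stdBasis n i + stdBasis n j)) ∧
              P.Adj (f (a + stdBasis n j)) (f (a + stdBasis n i + stdBasis n j)) := by
            refine ⟨?_, hmaps (a + stdBasis n i) j, ?_⟩
            · intro h
              have hm1 : a + stdBasis n i + stdBasis n j ∈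
                  (cube n).neighborSet (a + stdBasis n i) := adj_add _ j
              have hm2 : a ∈ (cube n).neighborSet (a + stdBasis n i) := hadj_back a i
              exact add_add_ne a (Ne.symm hj) (hinjN (a + stdBasis n i) hm1 hm2 h)
            · have := hmaps (a + stdBasis n j) i
              rwa [add_right_comm a (stdBasis n j) (stdBasis n i)] at this
          have cand2 : f (b + stdBasis n (σ i) + stdBasis n (σ j)) ≠ f a ∧
              P.Adj (f (a + stdBasis n i)) (f (b + stdBasis n (σ i) + stdBasis n (σ j))) ∧
              P.Adj (f (a + stdBasis n j)) (f (b + stdBasis n (σ i) + stdBasis n (σ j))) := by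
            refine ⟨?_, ?_, ?_⟩
            · rw [k0]
              intro h
              have hm1 : b + stdBasis n (σ i) + stdBasis n (σ j) ∈
                  (cube n).neighborSet (b + stdBasis n (σ i)) := adj_add _ (σ j)
              have hm2 : b ∈ (cube n).neighborSet (b + stdBasis n (σ i)) := hadj_back b (σ i)
              exact add_add_ne b hσij (hinjN (b + stdBasis n (σ i)) hm1 hm2 h)
            · rw [k1]
              exact hmaps (b + stdBasis n (σ i)) (σ j)
            · rw [k2]
              have := hmaps (b + stdBasis n (σ j)) (σ i)
              rwa [add_right_comm b (stdBasis n (σ j)) (stdBasis n (σ i))] at this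
          exact hEU.unique cand1 cand2
  -- build the automorphism
  let gE : (Fin n → ZMod 2) ≃ (Fin n → ZMod 2) :=
    { toFun := fun z k => y k + (z (σ.symm k) + x (σ.symm k))
      invFun := fun u k => x k + (u (σ k) + y (σ k))
      left_inv := by
        intro z; funext k
        simp only [Equiv.symm_apply_apply]
        generalize x k = X; generalize y (σ k) = Y; generalize z k = Z
        revert X Y Z; decide
      right_inv := by
        intro u; funext k
        simp only [Equiv.apply_symm_apply]
        generalize x (σ.symm k) = X; generalize y k = Y; generalize u k = U
        revert X Y U; decide }
  have hdist : ∀ z z' : Fin n → ZMod 2,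
      hammingDist (gE z) (gE z') = hammingDist z z' := by
    intro z z'
    rw [hd_def, hd_def]
    apply Finset.card_equiv σ.symm
    intro k
    simp only [Finset.mem_filter, Finset.mem_univ, true_and]
    show ¬(y k + (z (σ.symm k) + x (σ.symm k)) = y k + (z' (σ.symm k) + x (σ.symm k))) ↔ _
    simp [add_right_inj, add_left_inj]
  let g : cube n ≃g cube n :=
    { gE with
      map_rel_iff' := by
        intro z z'
        show hammingDist (gE z) (gE z') = 1 ↔ hammingDist z z' = 1
        rw [hdist] }
  have hgx : g x = y := by
    show (fun k => y k + (x (σ.symm k) + x (σ.symm k))) = y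
    funext k
    generalize x (σ.symm k) = X; generalize y k = Y
    revert X Y; decide
  have hgdeck : ∀ z, f (g z) = f z := by
    intro z
    have h1 := (key (hammingDist 0 (z + x)) (z + x) rfl).1
    have e1 : x + (z + x) = z := by
      funext k
      simp only [Pi.add_apply]
      generalize x k = X; generalize z k = Z
      revert X Z; decide
    have e2 : g z = y + A (z + x) := rfl
    rw [e2, ← h1, e1]
  have huniq : ∀ g' : cube n ≃g cube n, (∀ z, f (g' z) = f z) → g' x = y → ∀ z, g' z = g z := by
    intro g' hd' hx'
    have hstep : ∀ z z' : Fin n → ZMod 2, (cube n).Adj z z' → g' z = g z → g' z' = g z' := by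
      intro z z' hadj heq
      have h1 : g' z' ∈ (cube n).neighborSet (g z) := by
        rw [← heq]
        exact g'.map_adj_iff.mpr hadj
      have h2 : g z' ∈ (cube n).neighborSet (g z) := g.map_adj_iff.mpr hadj
      exact hinjN (g z) h1 h2 (by rw [hd' z', hgdeck z'])
    intro z
    obtain ⟨p⟩ := cube_reachable x z
    have hwalk : ∀ {u w : Fin n → ZMod 2} (p : (cube n).Walk u w), g' u = g u → g' w = g w := by
      intro u w p
      induction p with
      | nil => exact id
      | cons h p ih => exact fun h0 => ih (hstep _ _ h h0)
    exact hwalk p (by rw [hx', hgx])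
  refine ⟨g, ⟨hgdeck, hgx⟩, ?_⟩
  rintro g' ⟨hd', hx'⟩
  exact DFunLike.ext g' g (huniq g' hd' hx')
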